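/- arXiv:1511.02849 — 6 statements merged into one kernel-verified Lean document; each statement's English description precedes it below -/
import Mathlib

section
/- Let X be a topological space such that every point has a neighborhood basis of clopen sets (ind X = 0), and let f : X → ℝ be a continuous injection. Then there exists a continuous injection of X into the Cantor set 2^ℕ. -/
theorem stmt_4 {X : Type*} [TopologicalSpace X]
    (hind : ∀ (x : X), ∀ U ∈ nhds x, ∃ V, IsClopen V ∧ V ∈ nhds x ∧ V ⊆ U)
    (f : X → ℝ) (hf : Continuous f) (hinj : Function.Injective f) :
    ∃ g : X → (ℕ → Bool), Continuous g ∧ Function.Injective g := by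
  classical
  -- For each triple of rationals, choose a suitable clopen set around the
  -- (at most one) point of `f ⁻¹' {r}`.
  have key : ∀ s r t : ℚ, ∃ V : Set X, IsClopen V ∧
      ((s : ℝ) < r → (r : ℝ) < t → V ⊆ f ⁻¹' Set.Ioo (s : ℝ) (t : ℝ)) ∧
      ∀ x, f x = (r : ℝ) → x ∈ V := by
    intro s r t
    by_cases hx : ∃ x, f x = (r : ℝ)
    · obtain ⟨x0, hx0⟩ := hx
      by_cases ho : (s : ℝ) < r ∧ (r : ℝ) < t
      · have hU : f ⁻¹' Set.Ioo (s : ℝ) (t : ℝ) ∈ nhds x0 := by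
          apply (isOpen_Ioo.preimage hf).mem_nhds
          simp [hx0, ho.1, ho.2]
        obtain ⟨V, hVc, hVn, hVU⟩ := hind x0 _ hU
        refine ⟨V, hVc, fun _ _ => hVU, fun x hfx => ?_⟩
        have : x = x0 := hinj (by rw [hfx, hx0])
        exact this ▸ mem_of_mem_nhds hVn
      · exact ⟨Set.univ, isClopen_univ, fun h1 h2 => absurd ⟨h1, h2⟩ ho,
          fun _ _ => Set.mem_univ _⟩
    · exact ⟨∅, isClopen_empty, fun _ _ => Set.empty_subset _,
        fun x hfx => absurd ⟨x, hfx⟩ hx⟩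
  choose V hVc hVsub hVmem using key
  set C : ℚ × ℚ × ℚ → Set X :=
    fun p => f ⁻¹' Set.Iio (p.2.1 : ℝ) ∪ V p.1 p.2.1 p.2.2 with hC
  have hCclopen : ∀ p, IsClopen (C p) := by
    intro ⟨s, r, t⟩
    constructor
    · -- closed
      rw [← isOpen_compl_iff, isOpen_iff_mem_nhds]
      intro z hz
      have hz1 : z ∉ f ⁻¹' Set.Iio (r : ℝ) := fun h => hz (Or.inl h)
      have hz2 : z ∉ V s r t := fun h => hz (Or.inr h)
      have hfz : (r : ℝ) < f z := by
        rcases lt_trichotomy (f z) (r : ℝ) with h | h | h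
        · exact absurd h hz1
        · exact absurd ((hVmem s r t) z h) hz2
        · exact h
      have hmem : f ⁻¹' Set.Ioi (r : ℝ) ∩ (V s r t)ᶜ ∈ nhds z := by
        apply Filter.inter_mem
        · exact (isOpen_Ioi.preimage hf).mem_nhds hfz
        · exact ((hVc s r t).isClosed.isOpen_compl).mem_nhds hz2
      filter_upwards [hmem] with w hw
      simp only [Set.mem_inter_iff, Set.mem_preimage, Set.mem_Ioi, Set.mem_compl_iff] at hw
      rintro (h | h)
      · exact lt_asymm hw.1 h
      · exact hw.2 h
    · exact ((isOpen_Iio.preimage hf)).union (hVc s r t).isOpen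
  refine ⟨fun x n => (C (Denumerable.ofNat (ℚ × ℚ × ℚ) n)).boolIndicator x, ?_, ?_⟩
  · apply continuous_pi
    intro n
    exact (continuous_boolIndicator_iff_isClopen _).mpr (hCclopen _)
  · intro x y hxy
    by_contra hne
    have hfne : f x ≠ f y := fun h => hne (hinj h)
    have sep : ∀ a b : X, f a < f b → ∃ p : ℚ × ℚ × ℚ, a ∈ C p ∧ b ∉ C p := by
      intro a b hab
      obtain ⟨r, har, hrb⟩ := exists_rat_btwn hab
      obtain ⟨t, hrt, htb⟩ := exists_rat_btwn hrb
      refine ⟨(r - 1, r, t), Or.inl har, ?_⟩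
      have hsr : ((r - 1 : ℚ) : ℝ) < (r : ℝ) := by push_cast; linarith
      rintro (h | h)
      · exact absurd hrb (not_lt_of_gt h)
      · exact absurd (hVsub (r - 1) r t hsr hrt h).2 (not_lt_of_gt htb)
    have main : ∀ a b : X, f a < f b →
        (fun n => (C (Denumerable.ofNat (ℚ × ℚ × ℚ) n)).boolIndicator a) ≠
        (fun n => (C (Denumerable.ofNat (ℚ × ℚ × ℚ) n)).boolIndicator b) := by
      intro a b hab heq
      obtain ⟨p, hpa, hpb⟩ := sep a b hab
      obtain ⟨n, hn⟩ : ∃ n, Denumerable.ofNat (ℚ × ℚ × ℚ) n = p :=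
        (Denumerable.eqv (ℚ × ℚ × ℚ)).symm.surjective p
      have := congrFun heq n
      rw [hn] at this
      rw [(Set.mem_iff_boolIndicator _ _).mp hpa,
        ((Set.notMem_iff_boolIndicator _ _).mp hpb)] at this
      exact Bool.noConfusion this
    rcases lt_or_gt_of_ne hfne with h | h
    · exact main x y h hxy
    · exact main y x h hxy.symm
end

section
/- Let X be a topological space with a clopen neighborhood basis at every point (ind X = 0), and let f : X → ℝ be a continuous injection. Then there exist a subspace Y of the Cantor set 2^ℕ and continuous maps g : X → Y and h : Y → ℝ such that f = h ∘ g and g is a bijection onto Y. -/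
theorem stmt_5 {X : Type*} [TopologicalSpace X]
    (hind : ∀ (x : X), ∀ U ∈ nhds x, ∃ V, IsClopen V ∧ V ∈ nhds x ∧ V ⊆ U)
    (f : X → ℝ) (hf : Continuous f) (hinj : Function.Injective f) :
    ∃ (Y : Set (ℕ → Bool)) (g : X → Y) (h : Y → ℝ),
      Continuous g ∧ Continuous h ∧ f = h ∘ g ∧ Function.Bijective g := by
  classical
  -- Step 1: small clopen sets around the (at most one) preimage of each rational
  have hV : ∀ (q : ℚ) (n : ℕ), ∃ V : Set X, IsClopen V ∧
      V ⊆ f ⁻¹' (Set.Ioo ((q:ℝ) - 1/(n+1)) ((q:ℝ) + 1/(n+1))) ∧ f ⁻¹' {(q:ℝ)} ⊆ V := by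
    intro q n
    by_cases hx : ∃ x0, f x0 = (q:ℝ)
    · obtain ⟨x0, hx0⟩ := hx
      have hpos : (0:ℝ) < 1/(n+1) := by positivity
      have hU : f ⁻¹' (Set.Ioo ((q:ℝ) - 1/(n+1)) ((q:ℝ) + 1/(n+1))) ∈ nhds x0 := by
        apply (isOpen_Ioo.preimage hf).mem_nhds
        simp only [Set.mem_preimage, Set.mem_Ioo, hx0]
        constructor <;> linarith
      obtain ⟨V, hVc, hVn, hVs⟩ := hind x0 _ hU
      refine ⟨V, hVc, hVs, ?_⟩
      intro x1 hx1
      have : x1 = x0 := hinj (by simpa using hx1.trans hx0.symm)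
      exact this ▸ mem_of_mem_nhds hVn
    · exact ⟨∅, isClopen_empty, Set.empty_subset _, by
        intro x1 hx1; exact absurd ⟨x1, hx1⟩ hx⟩
  choose V hVclopen hVsub hVq using hV
  -- Step 2: the clopen sandwich sets
  set U : ℚ → ℕ → Set X := fun q n => f ⁻¹' Set.Iio (q:ℝ) ∪ V q n with hU_def
  have hUclopen : ∀ q n, IsClopen (U q n) := by
    intro q n
    constructor
    · rw [← isOpen_compl_iff]
      have : (U q n)ᶜ = f ⁻¹' Set.Ioi (q:ℝ) ∩ (V q n)ᶜ := by
        ext x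
        simp only [hU_def, Set.mem_compl_iff, Set.mem_union, Set.mem_preimage,
          Set.mem_Iio, Set.mem_Ioi, Set.mem_inter_iff, not_or]
        constructor
        · rintro ⟨h1, h2⟩
          refine ⟨lt_of_le_of_ne (not_lt.mp h1) ?_, h2⟩
          intro hc
          exact h2 (hVq q n (by simp [← hc]))
        · rintro ⟨h1, h2⟩
          exact ⟨not_lt.mpr h1.le, h2⟩
      rw [this]
      exact (isOpen_Ioi.preimage hf).inter (hVclopen q n).1.isOpen_compl
    · exact (isOpen_Iio.preimage hf).union (hVclopen q n).2
  have hUlow : ∀ (q : ℚ) (n : ℕ), f ⁻¹' Set.Iio (q:ℝ) ⊆ U q n := fun q n => Set.subset_union_left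
  have hUhigh : ∀ (q : ℚ) (n : ℕ), U q n ⊆ f ⁻¹' Set.Iio ((q:ℝ) + 1/(n+1)) := by
    intro q n x hx
    have hpos : (0:ℝ) < 1/(n+1) := by positivity
    rcases hx with hx | hx
    · simp only [Set.mem_preimage, Set.mem_Iio] at hx ⊢; linarith
    · have := hVsub q n hx
      simp only [Set.mem_preimage, Set.mem_Ioo] at this
      simp only [Set.mem_preimage, Set.mem_Iio]
      exact this.2
  -- Step 3: encode into 2^ℕ
  let e : ℕ ≃ ℚ × ℕ := (Denumerable.eqv (ℚ × ℕ)).symm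
  let g0 : X → ℕ → Bool := fun x k => (U (e k).1 (e k).2).boolIndicator x
  have hg0cont : Continuous g0 := by
    apply continuous_pi
    intro k
    exact (continuous_boolIndicator_iff_isClopen _).mpr (hUclopen _ _)
  -- Step 4: key approximation lemma
  have key : ∀ (x : X) (ε : ℝ), 0 < ε → ∃ F : Finset ℕ,
      ∀ x', (∀ k ∈ F, g0 x' k = g0 x k) → |f x' - f x| < ε := by
    intro x ε hε
    obtain ⟨p, hp1, hp2⟩ := exists_rat_btwn (show f x - ε < f x by linarith)
    obtain ⟨n, hn⟩ := exists_nat_one_div_lt (show (0:ℝ) < f x - p by linarith)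
    obtain ⟨q, hq1, hq2⟩ := exists_rat_btwn (show f x < f x + ε/2 by linarith)
    obtain ⟨m, hm⟩ := exists_nat_one_div_lt (show (0:ℝ) < ε/2 by linarith)
    refine ⟨{e.symm (p, n), e.symm (q, m)}, ?_⟩
    intro x' hx'
    have h1 := hx' (e.symm (p, n)) (by simp)
    have h2 := hx' (e.symm (q, m)) (by simp)
    simp only [g0, Equiv.apply_symm_apply] at h1 h2
    have hmem1 : (x' ∈ U p n) ↔ (x ∈ U p n) := by
      rw [Set.mem_iff_boolIndicator, Set.mem_iff_boolIndicator, h1]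
    have hmem2 : (x' ∈ U q m) ↔ (x ∈ U q m) := by
      rw [Set.mem_iff_boolIndicator, Set.mem_iff_boolIndicator, h2]
    have hxnot : x ∉ U p n := by
      rintro (hc | hc)
      · simp only [Set.mem_preimage, Set.mem_Iio] at hc; linarith
      · have := hVsub p n hc
        simp only [Set.mem_preimage, Set.mem_Ioo] at this
        linarith [this.2]
    have hxin : x ∈ U q m := hUlow q m (by simp only [Set.mem_preimage, Set.mem_Iio]; exact hq1)
    have hlow : (p:ℝ) ≤ f x' := by
      by_contra hc
      push_neg at hc
      exact (hmem1.not.mpr hxnot)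
        (hUlow p n (by simp only [Set.mem_preimage, Set.mem_Iio]; exact hc))
    have hhigh : f x' < (q:ℝ) + 1/(m+1) := by
      have := hUhigh q m (hmem2.mpr hxin)
      simpa using this
    rw [abs_lt]
    constructor <;> linarith
  have hff : ∀ x x', g0 x' = g0 x → f x' = f x := by
    intro x x' hgg
    by_contra hne
    obtain ⟨F, hF⟩ := key x (|f x' - f x|) (abs_pos.mpr (sub_ne_zero.mpr hne))
    exact lt_irrefl _ (hF x' (fun k _ => by rw [hgg]))
  have hg0inj : Function.Injective g0 := fun x' x hgg => hinj (hff x x' hgg)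
  -- Step 5: assemble
  refine ⟨Set.range g0, fun x => ⟨g0 x, Set.mem_range_self x⟩,
    fun y => f (Classical.choose y.2), ?_, ?_, ?_, ?_, ?_⟩
  · exact hg0cont.subtype_mk _
  · -- continuity of h
    rw [continuous_iff_continuousAt]
    intro y
    rw [ContinuousAt, Metric.tendsto_nhds]
    intro ε hε
    set x := Classical.choose y.2 with hx_def
    have hx : g0 x = (y : ℕ → Bool) := Classical.choose_spec y.2
    obtain ⟨F, hF⟩ := key x ε hε
    have hSopen : IsOpen {z : ℕ → Bool | ∀ k ∈ F, z k = g0 x k} := by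
      have : {z : ℕ → Bool | ∀ k ∈ F, z k = g0 x k} =
          ⋂ k ∈ F, (fun z : ℕ → Bool => z k) ⁻¹' {g0 x k} := by
        ext z; simp
      rw [this]
      exact isOpen_biInter_finset fun k _ =>
        (continuous_apply k).isOpen_preimage _ (isOpen_discrete _)
    have hmem : Subtype.val ⁻¹' {z : ℕ → Bool | ∀ k ∈ F, z k = g0 x k} ∈ nhds y := by
      apply (hSopen.preimage continuous_subtype_val).mem_nhds
      intro k _
      rw [← hx]
    filter_upwards [hmem] with y' hy'
    set x' := Classical.choose y'.2 with hx'_def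
    have hx' : g0 x' = (y' : ℕ → Bool) := Classical.choose_spec y'.2
    have : ∀ k ∈ F, g0 x' k = g0 x k := by
      intro k hk
      rw [hx']
      exact hy' k hk
    simpa [Real.dist_eq] using hF x' this
  · -- f = h ∘ g
    funext x
    have hx : g0 (Classical.choose (Set.mem_range_self (f := g0) x)) = g0 x :=
      Classical.choose_spec (Set.mem_range_self (f := g0) x)
    exact (hff x _ hx).symm
  · -- injective
    intro x x' hxx
    exact hg0inj (congrArg Subtype.val hxx)
  · -- surjective
    rintro ⟨y, x, rfl⟩
    exact ⟨x, rfl⟩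
end

section
/- Let L be a linearly ordered set with a topology generated by order-convex sets (a GO-space) that has a dense subset which is a countable union of subspaces each discrete in itself. Then L has a σ-disjoint π-base. -/
set_option linter.unusedSectionVars false
set_option maxHeartbeats 4000000

open Set TopologicalSpace

/-- The GO-space hypothesis: the topology is generated by order-convex sets.
(Convexity is stated in unfolded form to ease order-dualization.) -/
def GoH (L : Type*) [LinearOrder L] [t : TopologicalSpace L] : Prop :=
  ∃ C : Set (Set L), (∀ s ∈ C, ∀ x ∈ s, ∀ y ∈ s, Set.Icc x y ⊆ s) ∧
    t = TopologicalSpace.generateFrom C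

theorem go_basis {L : Type*} [LinearOrder L] [t : TopologicalSpace L]
    (hGO : GoH L) {O : Set L} {x : L} (hO : IsOpen O) (hx : x ∈ O) :
    ∃ W : Set L, x ∈ W ∧ W ⊆ O ∧ IsOpen W ∧ W.OrdConnected := by
  obtain ⟨C, hC, ht⟩ := hGO
  have hb := isTopologicalBasis_of_subbasis ht
  obtain ⟨W, hWmem, hxW, hWO⟩ := hb.exists_subset_of_mem_open hx hO
  refine ⟨W, hxW, hWO, hb.isOpen hWmem, ?_⟩
  obtain ⟨f, ⟨hfin, hfC⟩, rfl⟩ := hWmem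
  exact Set.ordConnected_sInter fun s hs => ⟨fun a ha b hb => hC s (hfC hs) a ha b hb⟩

theorem go_isOpen_Iio {L : Type*} [LinearOrder L] [t : TopologicalSpace L] [T2Space L]
    (hGO : GoH L) (b : L) : IsOpen (Iio b) := by
  rw [isOpen_iff_forall_mem_open]
  intro a ha
  rw [mem_Iio] at ha
  obtain ⟨U, V, hU, hV, haU, hbV, hUV⟩ := t2_separation (ne_of_lt ha)
  obtain ⟨W, haW, hWU, hWo, hWc⟩ := go_basis hGO hU haU
  refine ⟨W, fun c hc => ?_, hWo, haW⟩
  rw [mem_Iio]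
  by_contra h
  exact hUV.ne_of_mem (hWU (hWc.out haW hc ⟨ha.le, not_lt.mp h⟩)) hbV rfl

theorem go_isOpen_Ioi {L : Type*} [LinearOrder L] [t : TopologicalSpace L] [T2Space L]
    (hGO : GoH L) (b : L) : IsOpen (Ioi b) := by
  rw [isOpen_iff_forall_mem_open]
  intro a ha
  rw [mem_Ioi] at ha
  obtain ⟨U, V, hU, hV, haU, hbV, hUV⟩ := t2_separation (ne_of_gt ha)
  obtain ⟨W, haW, hWU, hWo, hWc⟩ := go_basis hGO hU haU
  refine ⟨W, fun c hc => ?_, hWo, haW⟩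
  rw [mem_Ioi]
  by_contra h
  exact hUV.ne_of_mem (hWU (hWc.out hc haW ⟨not_lt.mp h, ha.le⟩)) hbV rfl

theorem pure_nbhd {L : Type*} [LinearOrder L] [t : TopologicalSpace L]
    (hGO : GoH L) (D : ℕ → Set L) (hdisc : ∀ n, DiscreteTopology (D n))
    {n : ℕ} {e : L} (he : e ∈ D n) :
    ∃ V : Set L, IsOpen V ∧ V.OrdConnected ∧ e ∈ V ∧ V ∩ D n = {e} := by
  haveI := hdisc n
  have h1 : IsOpen ({(⟨e, he⟩ : D n)} : Set (D n)) := isOpen_discrete _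
  rw [isOpen_induced_iff] at h1
  obtain ⟨U, hU, hUe⟩ := h1
  have heU : e ∈ U := by
    have h2 : (⟨e, he⟩ : D n) ∈ (Subtype.val ⁻¹' U : Set (D n)) := by rw [hUe]; rfl
    exact h2
  obtain ⟨V, heV, hVU, hVo, hVc⟩ := go_basis hGO hU heU
  refine ⟨V, hVo, hVc, heV, subset_antisymm ?_ ?_⟩
  · rintro x ⟨hxV, hxD⟩
    have h3 : (⟨x, hxD⟩ : D n) ∈ (Subtype.val ⁻¹' U : Set (D n)) := hVU hxV
    rw [hUe] at h3
    rw [mem_singleton_iff]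
    exact Subtype.ext_iff.mp h3
  · rintro x hx
    rw [mem_singleton_iff] at hx
    subst hx
    exact ⟨heV, he⟩

/-- `V` is a convex open neighbourhood of `e` meeting `D m` exactly in `e`. -/
def Pur {L : Type*} [LinearOrder L] [t : TopologicalSpace L]
    (D : ℕ → Set L) (m : ℕ) (e : L) (V : Set L) : Prop :=
  IsOpen V ∧ V.OrdConnected ∧ e ∈ V ∧ V ∩ D m = {e}

/-- Union of the left parts of pure neighbourhoods of `e`. -/
def Lft {L : Type*} [LinearOrder L] [t : TopologicalSpace L]
    (D : ℕ → Set L) (m : ℕ) (e : L) : Set L :=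
  {x | x < e ∧ ∃ V, Pur D m e V ∧ x ∈ V}

/-- Union of the pure neighbourhoods of `e` lying entirely in `[e, →)`. -/
def Rc {L : Type*} [LinearOrder L] [t : TopologicalSpace L]
    (D : ℕ → Set L) (m : ℕ) (e : L) : Set L :=
  {x | ∃ V, Pur D m e V ∧ V ⊆ Ici e ∧ x ∈ V}

theorem lft_isOpen {L : Type*} [LinearOrder L] [t : TopologicalSpace L] [T2Space L]
    (hGO : GoH L) (D : ℕ → Set L) (m : ℕ) (e : L) : IsOpen (Lft D m e) := by
  have h : Lft D m e = ⋃ V ∈ {V : Set L | Pur D m e V}, V ∩ Iio e := by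
    ext x
    simp only [Lft, mem_setOf_eq, mem_iUnion, mem_inter_iff, mem_Iio, exists_prop]
    tauto
  rw [h]
  exact isOpen_biUnion fun V hV => hV.1.inter (go_isOpen_Iio hGO e)

theorem rc_isOpen {L : Type*} [LinearOrder L] [t : TopologicalSpace L]
    (D : ℕ → Set L) (m : ℕ) (e : L) : IsOpen (Rc D m e) := by
  have h : Rc D m e = ⋃ V ∈ {V : Set L | Pur D m e V ∧ V ⊆ Ici e}, V := by
    ext x
    simp only [Rc, mem_setOf_eq, mem_iUnion, exists_prop]
    tauto
  rw [h]
  exact isOpen_biUnion fun V hV => hV.1.1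

theorem rc_subset_Ici {L : Type*} [LinearOrder L] [t : TopologicalSpace L]
    {D : ℕ → Set L} {m : ℕ} {e : L} : Rc D m e ⊆ Ici e :=
  fun _ ⟨_, _, hVI, hxV⟩ => hVI hxV

theorem rc_ordConnected {L : Type*} [LinearOrder L] [t : TopologicalSpace L]
    {D : ℕ → Set L} {m : ℕ} {e : L} : (Rc D m e).OrdConnected := by
  constructor
  rintro x ⟨Vx, hVx, hVxI, hxVx⟩ y ⟨Vy, hVy, hVyI, hyVy⟩ z hz
  exact ⟨Vy, hVy, hVyI, hVy.2.1.out hVy.2.2.1 hyVy ⟨le_trans (hVxI hxVx) hz.1, hz.2⟩⟩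

theorem rc_disj_lt {L : Type*} [LinearOrder L] [t : TopologicalSpace L]
    {D : ℕ → Set L} {m : ℕ} {e e' : L} (hlt : e < e') (he' : e' ∈ D m) :
    Disjoint (Rc D m e) (Rc D m e') := by
  rw [Set.disjoint_left]
  rintro x ⟨V, ⟨hVo, hVc, heV, hVD⟩, hVI, hxV⟩ ⟨V', hV', hV'I, hxV'⟩
  have h1 : e' ∈ V := hVc.out heV hxV ⟨hlt.le, hV'I hxV'⟩
  have h2 : e' ∈ V ∩ D m := ⟨h1, he'⟩
  rw [hVD] at h2
  exact hlt.ne' h2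

theorem rc_disj {L : Type*} [LinearOrder L] [t : TopologicalSpace L]
    {D : ℕ → Set L} {m : ℕ} {e e' : L} (he : e ∈ D m) (he' : e' ∈ D m)
    (hne : e ≠ e') : Disjoint (Rc D m e) (Rc D m e') := by
  rcases hne.lt_or_gt with h | h
  · exact rc_disj_lt h he'
  · exact (rc_disj_lt h he).symm

theorem lft_disj_lt {L : Type*} [LinearOrder L] [t : TopologicalSpace L]
    {D : ℕ → Set L} {m : ℕ} {e e' : L} (hlt : e < e') (he : e ∈ D m) :
    Disjoint (Lft D m e) (Lft D m e') := by
  rw [Set.disjoint_left]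
  rintro x ⟨hxe, V, hV, hxV⟩ ⟨hxe', V', ⟨hV'o, hV'c, he'V', hV'D⟩, hxV'⟩
  have h1 : e ∈ V' := hV'c.out hxV' he'V' ⟨hxe.le, hlt.le⟩
  have h2 : e ∈ V' ∩ D m := ⟨h1, he⟩
  rw [hV'D] at h2
  exact hlt.ne h2

theorem lft_disj {L : Type*} [LinearOrder L] [t : TopologicalSpace L]
    {D : ℕ → Set L} {m : ℕ} {e e' : L} (he : e ∈ D m) (he' : e' ∈ D m)
    (hne : e ≠ e') : Disjoint (Lft D m e) (Lft D m e') := by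
  rcases hne.lt_or_gt with h | h
  · exact lft_disj_lt h he
  · exact (lft_disj_lt h he').symm

/-- family of open singletons of `D k` -/
def famS {L : Type*} [LinearOrder L] [t : TopologicalSpace L]
    (D : ℕ → Set L) (k : ℕ) : Set (Set L) :=
  {u | IsOpen u ∧ ∃ e ∈ D k, u = {e}}

/-- family of maximal right-closed pure pieces -/
def famT1 {L : Type*} [LinearOrder L] [t : TopologicalSpace L]
    (D : ℕ → Set L) (k : ℕ) : Set (Set L) :=
  {u | ∃ e ∈ D k, u = Rc D k e ∧ u.Nonempty}

/-- family of left pieces truncated at a `D n`-point -/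
def famF {L : Type*} [LinearOrder L] [t : TopologicalSpace L]
    (D : ℕ → Set L) (n m : ℕ) : Set (Set L) :=
  {u | ∃ d e, d ∈ D n ∧ e ∈ D m ∧ d < e ∧ Ioo d e ∩ D n = ∅ ∧
    u = Lft D m e ∩ Ioi d ∧ u.Nonempty}

/-- family of right-closed pieces truncated at a `D k`-point -/
def famT2 {L : Type*} [LinearOrder L] [t : TopologicalSpace L]
    (D : ℕ → Set L) (m k : ℕ) : Set (Set L) :=
  {u | ∃ e f, e ∈ D m ∧ f ∈ D k ∧ e < f ∧ Ioo e f ∩ D k = ∅ ∧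
    u = Rc D m e ∩ Iio f ∧ u.Nonempty}

theorem famS_disj {L : Type*} [LinearOrder L] [t : TopologicalSpace L]
    (D : ℕ → Set L) (k : ℕ) : (famS D k).PairwiseDisjoint id := by
  rintro u ⟨huo, e, he, rfl⟩ v ⟨hvo, e', he', rfl⟩ huv
  have hne : e ≠ e' := fun h => huv (by rw [h])
  simp only [Function.onFun, id_eq]
  rw [Set.disjoint_left]
  intro x hx hx'
  rw [mem_singleton_iff] at hx hx'
  exact hne (hx.symm.trans hx')

theorem famT1_disj {L : Type*} [LinearOrder L] [t : TopologicalSpace L]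
    (D : ℕ → Set L) (k : ℕ) : (famT1 D k).PairwiseDisjoint id := by
  rintro u ⟨e, he, rfl, -⟩ v ⟨e', he', rfl, -⟩ huv
  have hne : e ≠ e' := fun h => huv (by rw [h])
  simp only [Function.onFun, id_eq]
  exact rc_disj he he' hne

theorem famF_disj {L : Type*} [LinearOrder L] [t : TopologicalSpace L]
    (D : ℕ → Set L) (n m : ℕ) : (famF D n m).PairwiseDisjoint id := by
  rintro u ⟨d, e, hd, he, hde, hIoo, rfl, -⟩ v ⟨d', e', hd', he', hde', hIoo', rfl, -⟩ huv
  simp only [Function.onFun, id_eq]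
  by_cases hee : e = e'
  · subst hee
    have hdd : d ≠ d' := fun h => huv (by rw [h])
    rw [Set.disjoint_left]
    rintro x ⟨hxL, hxd⟩ ⟨hxL', hxd'⟩
    rcases hdd.lt_or_gt with h | h
    · have h0 : d' ∈ Ioo d e ∩ D n := ⟨⟨h, lt_trans hxd' hxL.1⟩, hd'⟩
      rw [hIoo] at h0
      exact h0
    · have h0 : d ∈ Ioo d' e ∩ D n := ⟨⟨h, lt_trans hxd hxL.1⟩, hd⟩
      rw [hIoo'] at h0
      exact h0
  · exact Disjoint.mono inter_subset_left inter_subset_left (lft_disj he he' hee)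

theorem famT2_disj {L : Type*} [LinearOrder L] [t : TopologicalSpace L]
    (D : ℕ → Set L) (m k : ℕ) : (famT2 D m k).PairwiseDisjoint id := by
  rintro u ⟨e, f, he, hf, hef, hIoo, rfl, -⟩ v ⟨e', f', he', hf', hef', hIoo', rfl, -⟩ huv
  simp only [Function.onFun, id_eq]
  by_cases hee : e = e'
  · subst hee
    have hff : f ≠ f' := fun h => huv (by rw [h])
    rw [Set.disjoint_left]
    rintro x ⟨hxR, hxf⟩ ⟨hxR', hxf'⟩
    rcases hff.lt_or_gt with h | h
    · have h0 : f ∈ Ioo e f' ∩ D k := ⟨⟨hef, h⟩, hf⟩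
      rw [hIoo'] at h0
      exact h0
    · have h0 : f' ∈ Ioo e f ∩ D k := ⟨⟨hef', h⟩, hf'⟩
      rw [hIoo] at h0
      exact h0
  · exact Disjoint.mono inter_subset_left inter_subset_left (rc_disj he he' hee)

theorem famS_props {L : Type*} [LinearOrder L] [t : TopologicalSpace L]
    {D : ℕ → Set L} {k : ℕ} {u : Set L} (hu : u ∈ famS D k) :
    u.Nonempty ∧ IsOpen u := by
  obtain ⟨ho, e, he, rfl⟩ := hu
  exact ⟨⟨e, rfl⟩, ho⟩

theorem famT1_props {L : Type*} [LinearOrder L] [t : TopologicalSpace L]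
    {D : ℕ → Set L} {k : ℕ} {u : Set L} (hu : u ∈ famT1 D k) :
    u.Nonempty ∧ IsOpen u := by
  obtain ⟨e, he, rfl, hne⟩ := hu
  exact ⟨hne, rc_isOpen D k e⟩

theorem famF_props {L : Type*} [LinearOrder L] [t : TopologicalSpace L] [T2Space L]
    (hGO : GoH L) {D : ℕ → Set L} {n m : ℕ} {u : Set L}
    (hu : u ∈ famF D n m) : u.Nonempty ∧ IsOpen u := by
  obtain ⟨d, e, _, _, _, _, rfl, hne⟩ := hu
  exact ⟨hne, (lft_isOpen hGO D m e).inter (go_isOpen_Ioi hGO d)⟩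

theorem famT2_props {L : Type*} [LinearOrder L] [t : TopologicalSpace L] [T2Space L]
    (hGO : GoH L) {D : ℕ → Set L} {m k : ℕ} {u : Set L}
    (hu : u ∈ famT2 D m k) : u.Nonempty ∧ IsOpen u := by
  obtain ⟨e, f, _, _, _, _, rfl, hne⟩ := hu
  exact ⟨hne, (rc_isOpen D m e).inter (go_isOpen_Iio hGO f)⟩

theorem flag {L : Type*} [LinearOrder L] [t : TopologicalSpace L] [T2Space L]
    (hGO : GoH L) (D : ℕ → Set L) (hdense : Dense (⋃ n, D n))
    (hdisc : ∀ n, DiscreteTopology (D n)) {m : ℕ} {e : L} {W' : Set L}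
    (hW'o : IsOpen W') (hW'c : W'.OrdConnected) (hem : e ∈ D m)
    (hWD : W' ∩ D m = {e}) (hWI : W' ⊆ Ici e) (hy : (W' ∩ Ioi e).Nonempty) :
    ∃ u, (∃ k, u ∈ famT1 D k ∨ u ∈ famF D m k ∨ u ∈ famT2 D m k) ∧ u ⊆ W' := by
  have heW' : e ∈ W' := by
    have h : e ∈ W' ∩ D m := by rw [hWD]; rfl
    exact h.1
  have hU'o : IsOpen (W' ∩ Ioi e) := hW'o.inter (go_isOpen_Ioi hGO e)
  have hIcc : ∀ u ∈ W', Icc e u ⊆ W' := fun u hu => hW'c.out heW' hu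
  have hIooDm : ∀ u, u ∈ W' ∩ Ioi e → Ioo e u ∩ D m = ∅ := by
    intro u hu
    rw [eq_empty_iff_forall_notMem]
    rintro z ⟨⟨h1, h2⟩, hzD⟩
    have h3 : z ∈ W' ∩ D m := ⟨hIcc u hu.1 ⟨h1.le, h2.le⟩, hzD⟩
    rw [hWD] at h3
    exact h1.ne' h3
  have heRc : e ∈ Rc D m e := ⟨W', ⟨hW'o, hW'c, heW', hWD⟩, hWI, heW'⟩
  obtain ⟨f0, hf0U, k, hf0k⟩ : ∃ x ∈ W' ∩ Ioi e, ∃ k, x ∈ D k := by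
    obtain ⟨x, hxD, hxU⟩ := hdense.exists_mem_open hU'o hy
    exact ⟨x, hxU, mem_iUnion.mp hxD⟩
  have mkT2 : ∀ k' f, f ∈ D k' → f ∈ W' ∩ Ioi e → Ioo e f ∩ D k' = ∅ →
      ∃ u, (∃ k, u ∈ famT1 D k ∨ u ∈ famF D m k ∨ u ∈ famT2 D m k) ∧ u ⊆ W' := by
    intro k' f hfk hfU hEmpty
    refine ⟨Rc D m e ∩ Iio f,
      ⟨k', Or.inr (Or.inr ⟨e, f, hem, hfk, hfU.2, hEmpty, rfl, ⟨e, heRc, hfU.2⟩⟩)⟩, ?_⟩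
    rintro x ⟨hxR, hxf⟩
    exact hIcc f hfU.1 ⟨rc_subset_Ici hxR, le_of_lt hxf⟩
  by_cases hC : Ioo e f0 ∩ D k = ∅
  · exact mkT2 k f0 hf0k hf0U hC
  obtain ⟨g, hg⟩ := nonempty_iff_ne_empty.mpr hC
  have hgW : g ∈ W' := hIcc f0 hf0U.1 ⟨hg.1.1.le, hg.1.2.le⟩
  have hgU : g ∈ W' ∩ Ioi e := ⟨hgW, hg.1.1⟩
  by_cases hD : Ioo e g ∩ D k = ∅
  · exact mkT2 k g hg.2 hgU hD
  obtain ⟨g', hg'⟩ := nonempty_iff_ne_empty.mpr hD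
  have hg'f0 : g' ∈ Ioo e f0 := ⟨hg'.1.1, hg'.1.2.trans hg.1.2⟩
  have key : ∀ h, h ∈ D k → h ∈ Ioo e f0 →
      (∃ u, (∃ k, u ∈ famT1 D k ∨ u ∈ famF D m k ∨ u ∈ famT2 D m k) ∧ u ⊆ W') ∨
        f0 ∈ Rc D k h := by
    intro h hhk hhI
    have hhW : h ∈ W' := hIcc f0 hf0U.1 ⟨hhI.1.le, hhI.2.le⟩
    have hhU : h ∈ W' ∩ Ioi e := ⟨hhW, hhI.1⟩
    by_cases hLh : (Lft D k h ∩ Ioi e).Nonempty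
    · left
      refine ⟨Lft D k h ∩ Ioi e,
        ⟨k, Or.inr (Or.inl ⟨e, h, hem, hhk, hhI.1, hIooDm h hhU, rfl, hLh⟩)⟩, ?_⟩
      rintro x ⟨hxL, hxe⟩
      exact hIcc h hhW ⟨le_of_lt hxe, hxL.1.le⟩
    · rw [not_nonempty_iff_eq_empty] at hLh
      obtain ⟨Vh, hVho, hVhc, hhVh, hVhD⟩ := pure_nbhd hGO D hdisc hhk
      have hWho : IsOpen (Vh ∩ (W' ∩ Ioi e)) := hVho.inter hU'o
      have hWhc : (Vh ∩ (W' ∩ Ioi e)).OrdConnected :=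
        hVhc.inter (hW'c.inter Set.ordConnected_Ioi)
      have hhWh : h ∈ Vh ∩ (W' ∩ Ioi e) := ⟨hhVh, hhU⟩
      have hWhD : (Vh ∩ (W' ∩ Ioi e)) ∩ D k = {h} := by
        apply subset_antisymm
        · rintro x ⟨⟨hxV, _⟩, hxD⟩
          rw [← hVhD]
          exact ⟨hxV, hxD⟩
        · rintro x hx
          rw [mem_singleton_iff] at hx
          subst hx
          exact ⟨hhWh, hhk⟩
      have hWhI : Vh ∩ (W' ∩ Ioi e) ⊆ Ici h := by
        intro x hx
        by_contra hxh
        rw [mem_Ici, not_le] at hxh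
        have h5 : x ∈ Lft D k h ∩ Ioi e :=
          ⟨⟨hxh, Vh ∩ (W' ∩ Ioi e), ⟨hWho, hWhc, hhWh, hWhD⟩, hx⟩, hx.2.2⟩
        rw [hLh] at h5
        exact h5
      have hhRc : h ∈ Rc D k h :=
        ⟨Vh ∩ (W' ∩ Ioi e), ⟨hWho, hWhc, hhWh, hWhD⟩, hWhI, hhWh⟩
      by_cases hfR : f0 ∈ Rc D k h
      · right; exact hfR
      · left
        refine ⟨Rc D k h, ⟨k, Or.inl ⟨h, hhk, rfl, ⟨h, hhRc⟩⟩⟩, ?_⟩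
        intro x hx
        have hhx : h ≤ x := rc_subset_Ici hx
        have hxf : x < f0 := by
          by_contra hcon
          rw [not_lt] at hcon
          exact hfR (rc_ordConnected.out hhRc hx ⟨hhI.2.le, hcon⟩)
        exact hIcc f0 hf0U.1 ⟨hhI.1.le.trans hhx, hxf.le⟩
  rcases key g hg.2 hg.1 with done | hfg
  · exact done
  rcases key g' hg'.2 hg'f0 with done | hfg'
  · exact done
  exact absurd hfg' (Set.disjoint_left.mp (rc_disj hg.2 hg'.2 hg'.1.2.ne') hfg)

theorem right_case {L : Type*} [LinearOrder L] [t : TopologicalSpace L] [T2Space L]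
    (hGO : GoH L) (D : ℕ → Set L) (hdense : Dense (⋃ n, D n))
    (hdisc : ∀ n, DiscreteTopology (D n)) {n : ℕ} {d : L} {W : Set L}
    (hWo : IsOpen W) (hWcu : ∀ x ∈ W, ∀ y ∈ W, Icc x y ⊆ W) (hdn : d ∈ D n)
    (hWD : W ∩ D n = {d}) (hne : (W ∩ Ioi d).Nonempty) :
    ∃ u, (∃ i j, u ∈ famS D i ∨ u ∈ famT1 D i ∨ u ∈ famF D i j ∨ u ∈ famT2 D i j) ∧
      u ⊆ W := by
  have hWc : W.OrdConnected := ⟨fun x hx y hy => hWcu x hx y hy⟩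
  have hdW : d ∈ W := by
    have h : d ∈ W ∩ D n := by rw [hWD]; rfl
    exact h.1
  have hUo : IsOpen (W ∩ Ioi d) := hWo.inter (go_isOpen_Ioi hGO d)
  have hIcc : ∀ u ∈ W, Icc d u ⊆ W := fun u hu => hWc.out hdW hu
  have hIooDn : ∀ u, u ∈ W ∩ Ioi d → Ioo d u ∩ D n = ∅ := by
    intro u hu
    rw [eq_empty_iff_forall_notMem]
    rintro z ⟨⟨h1, h2⟩, hzD⟩
    have h3 : z ∈ W ∩ D n := ⟨hIcc u hu.1 ⟨h1.le, h2.le⟩, hzD⟩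
    rw [hWD] at h3
    exact h1.ne' h3
  obtain ⟨e, heU, m, hem⟩ : ∃ x ∈ W ∩ Ioi d, ∃ m, x ∈ D m := by
    obtain ⟨x, hxD, hxU⟩ := hdense.exists_mem_open hUo hne
    exact ⟨x, hxU, mem_iUnion.mp hxD⟩
  by_cases hA : (Lft D m e ∩ Ioi d).Nonempty
  · refine ⟨Lft D m e ∩ Ioi d,
      ⟨n, m, Or.inr (Or.inr (Or.inl ⟨d, e, hdn, hem, heU.2, hIooDn e heU, rfl, hA⟩))⟩, ?_⟩
    rintro x ⟨hxL, hxd⟩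
    exact hIcc e heU.1 ⟨le_of_lt hxd, hxL.1.le⟩
  rw [not_nonempty_iff_eq_empty] at hA
  obtain ⟨V₀, hV₀o, hV₀c, heV₀, hV₀D⟩ := pure_nbhd hGO D hdisc hem
  have hW'o : IsOpen (V₀ ∩ (W ∩ Ioi d)) := hV₀o.inter hUo
  have hW'c : (V₀ ∩ (W ∩ Ioi d)).OrdConnected :=
    hV₀c.inter (hWc.inter Set.ordConnected_Ioi)
  have heW' : e ∈ V₀ ∩ (W ∩ Ioi d) := ⟨heV₀, heU⟩
  have hW'D : (V₀ ∩ (W ∩ Ioi d)) ∩ D m = {e} := by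
    apply subset_antisymm
    · rintro x ⟨⟨hxV, _⟩, hxD⟩
      rw [← hV₀D]
      exact ⟨hxV, hxD⟩
    · rintro x hx
      rw [mem_singleton_iff] at hx
      subst hx
      exact ⟨heW', hem⟩
  have hW'I : V₀ ∩ (W ∩ Ioi d) ⊆ Ici e := by
    intro x hx
    by_contra hxe
    rw [mem_Ici, not_le] at hxe
    have h5 : x ∈ Lft D m e ∩ Ioi d :=
      ⟨⟨hxe, V₀ ∩ (W ∩ Ioi d), ⟨hW'o, hW'c, heW', hW'D⟩, hx⟩, hx.2.2⟩
    rw [hA] at h5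
    exact h5
  have hW'W : V₀ ∩ (W ∩ Ioi d) ⊆ W := fun x hx => hx.2.1
  by_cases hB : ((V₀ ∩ (W ∩ Ioi d)) ∩ Ioi e).Nonempty
  · obtain ⟨u, ⟨k, hk⟩, hsub⟩ := flag hGO D hdense hdisc hW'o hW'c hem hW'D hW'I hB
    refine ⟨u, ?_, hsub.trans hW'W⟩
    rcases hk with h | h | h
    · exact ⟨k, k, Or.inr (Or.inl h)⟩
    · exact ⟨m, k, Or.inr (Or.inr (Or.inl h))⟩
    · exact ⟨m, k, Or.inr (Or.inr (Or.inr h))⟩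
  · rw [not_nonempty_iff_eq_empty] at hB
    have hWe : V₀ ∩ (W ∩ Ioi d) = {e} := by
      apply subset_antisymm
      · intro x hx
        rcases (hW'I hx).lt_or_eq with h | h
        · have h6 : x ∈ (V₀ ∩ (W ∩ Ioi d)) ∩ Ioi e := ⟨hx, h⟩
          rw [hB] at h6
          exact h6.elim
        · rw [mem_singleton_iff]
          exact h.symm
      · rintro x hx
        rw [mem_singleton_iff] at hx
        subst hx
        exact heW'
    refine ⟨{e}, ⟨m, m, Or.inl ⟨hWe ▸ hW'o, e, hem, rfl⟩⟩, ?_⟩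
    intro x hx
    rw [mem_singleton_iff] at hx
    subst hx
    exact heU.1

/-- All the families, indexed by a single natural number. -/
def famAll {L : Type*} [LinearOrder L] [t : TopologicalSpace L]
    (D : ℕ → Set L) (i : ℕ) : Set (Set L) :=
  if (Nat.unpair i).1 = 0 then famS D (Nat.unpair (Nat.unpair i).2).1
  else if (Nat.unpair i).1 = 1 then famT1 D (Nat.unpair (Nat.unpair i).2).1
  else if (Nat.unpair i).1 = 2 then
    famF D (Nat.unpair (Nat.unpair i).2).1 (Nat.unpair (Nat.unpair i).2).2
  else famT2 D (Nat.unpair (Nat.unpair i).2).1 (Nat.unpair (Nat.unpair i).2).2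

theorem famAll_S {L : Type*} [LinearOrder L] [t : TopologicalSpace L]
    (D : ℕ → Set L) (a b : ℕ) :
    famAll D (Nat.pair 0 (Nat.pair a b)) = famS D a := by
  simp [famAll, Nat.unpair_pair]

theorem famAll_T1 {L : Type*} [LinearOrder L] [t : TopologicalSpace L]
    (D : ℕ → Set L) (a b : ℕ) :
    famAll D (Nat.pair 1 (Nat.pair a b)) = famT1 D a := by
  simp [famAll, Nat.unpair_pair]

theorem famAll_F {L : Type*} [LinearOrder L] [t : TopologicalSpace L]
    (D : ℕ → Set L) (a b : ℕ) :
    famAll D (Nat.pair 2 (Nat.pair a b)) = famF D a b := by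
  simp [famAll, Nat.unpair_pair]

theorem famAll_T2 {L : Type*} [LinearOrder L] [t : TopologicalSpace L]
    (D : ℕ → Set L) (a b : ℕ) :
    famAll D (Nat.pair 3 (Nat.pair a b)) = famT2 D a b := by
  simp [famAll, Nat.unpair_pair]

theorem famAll_disj {L : Type*} [LinearOrder L] [t : TopologicalSpace L]
    (D : ℕ → Set L) (i : ℕ) : (famAll D i).PairwiseDisjoint id := by
  unfold famAll
  split_ifs
  · exact famS_disj D _
  · exact famT1_disj D _
  · exact famF_disj D _ _
  · exact famT2_disj D _ _

theorem famAll_props {L : Type*} [LinearOrder L] [t : TopologicalSpace L] [T2Space L]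
    (hGO : GoH L) (D : ℕ → Set L) (i : ℕ) {u : Set L}
    (hu : u ∈ famAll D i) : u.Nonempty ∧ IsOpen u := by
  unfold famAll at hu
  split_ifs at hu
  · exact famS_props hu
  · exact famT1_props hu
  · exact famF_props hGO hu
  · exact famT2_props hGO hu

theorem famAll_right {L : Type*} [LinearOrder L] [t : TopologicalSpace L] [T2Space L]
    (hGO : GoH L) (D : ℕ → Set L) (hdense : Dense (⋃ n, D n))
    (hdisc : ∀ n, DiscreteTopology (D n)) {n : ℕ} {d : L} {W : Set L}
    (hWo : IsOpen W) (hWcu : ∀ x ∈ W, ∀ y ∈ W, Icc x y ⊆ W) (hdn : d ∈ D n)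
    (hWD : W ∩ D n = {d}) (hne : (W ∩ Ioi d).Nonempty) :
    ∃ i, ∃ u ∈ famAll D i, u ⊆ W := by
  obtain ⟨u, ⟨i, j, hcase⟩, hsub⟩ := right_case hGO D hdense hdisc hWo hWcu hdn hWD hne
  rcases hcase with h | h | h | h
  · exact ⟨Nat.pair 0 (Nat.pair i j), u, by rw [famAll_S]; exact h, hsub⟩
  · exact ⟨Nat.pair 1 (Nat.pair i j), u, by rw [famAll_T1]; exact h, hsub⟩
  · exact ⟨Nat.pair 2 (Nat.pair i j), u, by rw [famAll_F]; exact h, hsub⟩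
  · exact ⟨Nat.pair 3 (Nat.pair i j), u, by rw [famAll_T2]; exact h, hsub⟩

theorem famAll_single {L : Type*} [LinearOrder L] [t : TopologicalSpace L]
    (D : ℕ → Set L) {n : ℕ} {d : L} (hdn : d ∈ D n)
    (ho : IsOpen ({d} : Set L)) : ∃ i, ({d} : Set L) ∈ famAll D i :=
  ⟨Nat.pair 0 (Nat.pair n n), by rw [famAll_S]; exact ⟨ho, d, hdn, rfl⟩⟩

theorem famAll_left {L : Type*} [inst : LinearOrder L] [t : TopologicalSpace L] [T2Space L]
    (hGO2 : @GoH L (LinearOrder.swap L inst) t) (D : ℕ → Set L)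
    (hdense : Dense (⋃ n, D n)) (hdisc : ∀ n, DiscreteTopology (D n))
    {n : ℕ} {d : L} {W : Set L}
    (hWo : IsOpen W) (hWcu : ∀ x ∈ W, ∀ y ∈ W, Icc x y ⊆ W) (hdn : d ∈ D n)
    (hWD : W ∩ D n = {d}) (hne : (W ∩ Iio d).Nonempty) :
    ∃ i, ∃ u ∈ @famAll L (LinearOrder.swap L inst) t D i, u ⊆ W := by
  have hWcu2 : ∀ a ∈ W, ∀ b ∈ W,
      @Set.Icc L (@PartialOrder.toPreorder L
        (@LinearOrder.toPartialOrder L (LinearOrder.swap L inst))) a b ⊆ W :=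
    fun a ha b hb z hz => hWcu b hb a ha ⟨hz.2, hz.1⟩
  have hne2 : (W ∩ @Set.Ioi L (@PartialOrder.toPreorder L
      (@LinearOrder.toPartialOrder L (LinearOrder.swap L inst))) d).Nonempty := hne
  exact @famAll_right L (LinearOrder.swap L inst) t ‹T2Space L› hGO2 D hdense hdisc
    n d W hWo hWcu2 hdn hWD hne2

/-- Interleaving of two `ℕ`-indexed families. -/
def comb {α : Type*} (A B : ℕ → α) (i : ℕ) : α :=
  if i % 2 = 0 then A (i / 2) else B (i / 2)

theorem comb_cases {α : Type*} (A B : ℕ → α) (i : ℕ) :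
    comb A B i = A (i / 2) ∨ comb A B i = B (i / 2) := by
  unfold comb
  split_ifs
  · exact Or.inl rfl
  · exact Or.inr rfl

theorem comb_even {α : Type*} (A B : ℕ → α) (i : ℕ) : comb A B (2 * i) = A i := by
  unfold comb
  rw [if_pos (by omega : 2 * i % 2 = 0), (by omega : 2 * i / 2 = i)]

theorem comb_odd {α : Type*} (A B : ℕ → α) (i : ℕ) : comb A B (2 * i + 1) = B i := by
  unfold comb
  rw [if_neg (by omega : ¬(2 * i + 1) % 2 = 0), (by omega : (2 * i + 1) / 2 = i)]

theorem stmt_7 {L : Type*} [LinearOrder L] [t : TopologicalSpace L] [T2Space L]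
    (hGO : ∃ C : Set (Set L), (∀ s ∈ C, s.OrdConnected) ∧
      t = TopologicalSpace.generateFrom C)
    (D : ℕ → Set L) (hdense : Dense (⋃ n, D n))
    (hdisc : ∀ n, DiscreteTopology (D n)) :
    ∃ 𝒰 : ℕ → Set (Set L),
      (∀ n, (𝒰 n).PairwiseDisjoint id) ∧
      (∀ n, ∀ u ∈ 𝒰 n, u.Nonempty ∧ IsOpen u) ∧
      (∀ O : Set L, IsOpen O → O.Nonempty → ∃ n, ∃ u ∈ 𝒰 n, u ⊆ O) := by
  have hGO' : GoH L := by
    obtain ⟨C, hC, ht⟩ := hGO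
    exact ⟨C, fun s hs x hx y hy => (hC s hs).out hx hy, ht⟩
  have hGO2 : @GoH L (LinearOrder.swap L ‹LinearOrder L›) t := by
    obtain ⟨C, hC, ht⟩ := hGO
    refine ⟨C, fun s hs => ?_, ht⟩
    intro x hx y hy z hz
    exact (hC s hs).out hy hx ⟨hz.2, hz.1⟩
  refine ⟨comb (famAll D) (@famAll L (LinearOrder.swap L ‹LinearOrder L›) t D), ?_, ?_, ?_⟩
  · intro i
    rcases comb_cases (famAll D) (@famAll L (LinearOrder.swap L ‹LinearOrder L›) t D) i
      with h | h
    · rw [h]; exact famAll_disj D _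
    · rw [h]; exact @famAll_disj L (LinearOrder.swap L ‹LinearOrder L›) t D _
  · intro i u hu
    rcases comb_cases (famAll D) (@famAll L (LinearOrder.swap L ‹LinearOrder L›) t D) i
      with h | h
    · rw [h] at hu; exact famAll_props hGO' D _ hu
    · rw [h] at hu
      exact @famAll_props L (LinearOrder.swap L ‹LinearOrder L›) t _ hGO2 D (i / 2) u hu
  · intro O hO hOne
    obtain ⟨x, hxO⟩ := hOne
    obtain ⟨W0, hxW0, hW0O, hW0o, hW0c⟩ := go_basis hGO' hO hxO
    obtain ⟨dd, hdW0, n, hdn⟩ : ∃ y ∈ W0, ∃ n, y ∈ D n := by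
      obtain ⟨y, hyD, hyW⟩ := hdense.exists_mem_open hW0o ⟨x, hxW0⟩
      exact ⟨y, hyW, Set.mem_iUnion.mp hyD⟩
    obtain ⟨V, hVo, hVc, hdV, hVD⟩ := pure_nbhd hGO' D hdisc hdn
    have hW1o : IsOpen (W0 ∩ V) := hW0o.inter hVo
    have hW1c : (W0 ∩ V).OrdConnected := hW0c.inter hVc
    have hdW1 : dd ∈ W0 ∩ V := ⟨hdW0, hdV⟩
    have hW1D : (W0 ∩ V) ∩ D n = {dd} := by
      apply subset_antisymm
      · rintro z ⟨⟨_, hzV⟩, hzD⟩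
        rw [← hVD]
        exact ⟨hzV, hzD⟩
      · rintro z hz
        rw [Set.mem_singleton_iff] at hz
        subst hz
        exact ⟨hdW1, hdn⟩
    have hW1O : W0 ∩ V ⊆ O := fun z hz => hW0O hz.1
    by_cases hR : ((W0 ∩ V) ∩ Set.Ioi dd).Nonempty
    · obtain ⟨i, u, hu, hsub⟩ := famAll_right hGO' D hdense hdisc hW1o
        (fun a ha b hb => hW1c.out ha hb) hdn hW1D hR
      refine ⟨2 * i, u, ?_, hsub.trans hW1O⟩
      rw [comb_even]
      exact hu
    by_cases hLc : ((W0 ∩ V) ∩ Set.Iio dd).Nonempty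
    · obtain ⟨i, u, hu, hsub⟩ :=
        famAll_left hGO2 D hdense hdisc hW1o
          (fun a ha b hb => hW1c.out ha hb) hdn hW1D hLc
      refine ⟨2 * i + 1, u, ?_, hsub.trans hW1O⟩
      rw [comb_odd]
      exact hu
    · have hW1e : W0 ∩ V = {dd} := by
        apply subset_antisymm
        · intro z hz
          rcases lt_trichotomy z dd with h | h | h
          · exact absurd ⟨hz, h⟩ (fun hh => hLc ⟨z, hh⟩)
          · rw [Set.mem_singleton_iff]; exact h
          · exact absurd ⟨hz, h⟩ (fun hh => hR ⟨z, hh⟩)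
        · rintro z hz
          rw [Set.mem_singleton_iff] at hz
          subst hz
          exact hdW1
      obtain ⟨i, hi⟩ := famAll_single D hdn (hW1e ▸ hW1o)
      refine ⟨2 * i, {dd}, ?_, by rw [← hW1e]; exact hW1O⟩
      rw [comb_even]
      exact hi
end

section
/- Every separable GO-space has a σ-disjoint π-base. -/
open Set TopologicalSpace

section Aux
variable {L : Type*} [LinearOrder L] [TopologicalSpace L]

/-- family of isolated-point singletons -/
def myFam0 (L : Type*) [TopologicalSpace L] : Set (Set L) :=
  {u | ∃ x : L, u = {x} ∧ IsOpen ({x} : Set L)}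

/-- jump pairs, lower point non-isolated -/
def myFamR (L : Type*) [LinearOrder L] [TopologicalSpace L] : Set (Set L) :=
  {u | ∃ x y : L, u = {x, y} ∧ x < y ∧ Set.Ioo x y = ∅ ∧ IsOpen u ∧ ¬ IsOpen ({x} : Set L)}

/-- jump pairs, upper point non-isolated -/
def myFamL (L : Type*) [LinearOrder L] [TopologicalSpace L] : Set (Set L) :=
  {u | ∃ x y : L, u = {x, y} ∧ x < y ∧ Set.Ioo x y = ∅ ∧ IsOpen u ∧ ¬ IsOpen ({y} : Set L)}

/-- triple jumps -/
def myFamB (L : Type*) [LinearOrder L] [TopologicalSpace L] : Set (Set L) :=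
  {u | ∃ p a s : L, u = {p, a, s} ∧ p < a ∧ a < s ∧ Set.Ioo p a = ∅ ∧ Set.Ioo a s = ∅ ∧
    IsOpen u ∧ ¬ IsOpen ({p, a} : Set L) ∧ ¬ IsOpen ({a, s} : Set L) ∧
    ¬ IsOpen ({p} : Set L) ∧ ¬ IsOpen ({a} : Set L) ∧ ¬ IsOpen ({s} : Set L)}

lemma myFam0_disj : (myFam0 L).PairwiseDisjoint id := by
  rintro u ⟨x, rfl, -⟩ v ⟨y, rfl, -⟩ huv
  show Disjoint ({x} : Set L) {y}
  exact Set.disjoint_singleton.mpr fun h => huv (by rw [h])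

lemma myFamR_key {a s a' s' : L} (has : a < s) (has' : a' < s')
    (h1 : Set.Ioo a s = ∅) (h1' : Set.Ioo a' s' = ∅)
    (ho : IsOpen ({a, s} : Set L)) (ho' : IsOpen ({a', s'} : Set L))
    (hn' : ¬ IsOpen ({a'} : Set L)) (haa' : a < a') :
    Disjoint ({a, s} : Set L) ({a', s'} : Set L) := by
  have hsa' : s ≤ a' := by
    by_contra h
    exact (Set.eq_empty_iff_forall_notMem.mp h1 a') ⟨haa', not_le.mp h⟩
  rcases eq_or_lt_of_le hsa' with heq | hlt
  · exfalso
    apply hn'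
    have hset : ({a, s} : Set L) ∩ {a', s'} = {a'} := by
      ext z
      simp only [Set.mem_inter_iff, Set.mem_insert_iff, Set.mem_singleton_iff]
      constructor
      · rintro ⟨h2 | h2, h3 | h3⟩
        · exact absurd (h2.symm.trans h3) (ne_of_lt haa')
        · exact absurd (h2.symm.trans h3) (ne_of_lt (haa'.trans has'))
        · exact h3
        · exact absurd (heq.symm.trans (h2.symm.trans h3)) (ne_of_lt has')
      · intro h
        exact ⟨Or.inr (h.trans heq.symm), Or.inl h⟩
    exact hset ▸ ho.inter ho'
  · rw [Set.disjoint_left]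
    intro z hz1 hz2
    simp only [Set.mem_insert_iff, Set.mem_singleton_iff] at hz1 hz2
    rcases hz1 with h | h <;> rcases hz2 with h' | h'
    · exact absurd (h.symm.trans h') (ne_of_lt haa')
    · exact absurd (h.symm.trans h') (ne_of_lt (haa'.trans has'))
    · exact absurd (h.symm.trans h') (ne_of_lt hlt)
    · exact absurd (h.symm.trans h') (ne_of_lt (hlt.trans has'))

lemma myFamR_disj : (myFamR L).PairwiseDisjoint id := by
  rintro u ⟨a, s, rfl, has, h1, ho, hn⟩ v ⟨a', s', rfl, has', h1', ho', hn'⟩ huv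
  show Disjoint ({a, s} : Set L) {a', s'}
  rcases lt_trichotomy a a' with h | heq | h
  · exact myFamR_key has has' h1 h1' ho ho' hn' h
  · exfalso
    apply huv
    subst heq
    rcases lt_trichotomy s s' with h | heq2 | h
    · exact absurd (Set.eq_empty_iff_forall_notMem.mp h1' s ⟨has, h⟩) not_false
    · rw [heq2]
    · exact absurd (Set.eq_empty_iff_forall_notMem.mp h1 s' ⟨has', h⟩) not_false
  · exact (myFamR_key has' has h1' h1 ho' ho hn h).symm

lemma myFamL_key {p a p' a' : L} (hpa : p < a) (hpa' : p' < a')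
    (h1 : Set.Ioo p a = ∅) (h1' : Set.Ioo p' a' = ∅)
    (ho : IsOpen ({p, a} : Set L)) (ho' : IsOpen ({p', a'} : Set L))
    (hn : ¬ IsOpen ({a} : Set L)) (haa' : a < a') :
    Disjoint ({p, a} : Set L) ({p', a'} : Set L) := by
  have hap' : a ≤ p' := by
    by_contra h
    exact (Set.eq_empty_iff_forall_notMem.mp h1' a) ⟨not_le.mp h, haa'⟩
  rcases eq_or_lt_of_le hap' with heq | hlt
  · exfalso
    apply hn
    have hset : ({p, a} : Set L) ∩ {p', a'} = {a} := by
      ext z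
      simp only [Set.mem_inter_iff, Set.mem_insert_iff, Set.mem_singleton_iff]
      constructor
      · rintro ⟨h2 | h2, h3 | h3⟩
        · exact absurd (h2.symm.trans h3) (ne_of_lt (hpa.trans_le hap'))
        · exact absurd (h2.symm.trans h3) (ne_of_lt (hpa.trans haa'))
        · exact h2
        · exact absurd (h2.symm.trans h3) (ne_of_lt haa')
      · intro h
        exact ⟨Or.inr h, Or.inl (h.trans heq)⟩
    exact hset ▸ ho.inter ho'
  · rw [Set.disjoint_left]
    intro z hz1 hz2
    simp only [Set.mem_insert_iff, Set.mem_singleton_iff] at hz1 hz2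
    rcases hz1 with h | h <;> rcases hz2 with h' | h'
    · exact absurd (h.symm.trans h') (ne_of_lt (hpa.trans hlt))
    · exact absurd (h.symm.trans h') (ne_of_lt (hpa.trans haa'))
    · exact absurd (h.symm.trans h') (ne_of_lt hlt)
    · exact absurd (h.symm.trans h') (ne_of_lt haa')

lemma myFamL_disj : (myFamL L).PairwiseDisjoint id := by
  rintro u ⟨p, a, rfl, hpa, h1, ho, hn⟩ v ⟨p', a', rfl, hpa', h1', ho', hn'⟩ huv
  show Disjoint ({p, a} : Set L) {p', a'}
  rcases lt_trichotomy a a' with h | heq | h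
  · exact myFamL_key hpa hpa' h1 h1' ho ho' hn h
  · exfalso
    apply huv
    subst heq
    rcases lt_trichotomy p p' with h | heq2 | h
    · exact absurd (Set.eq_empty_iff_forall_notMem.mp h1 p' ⟨h, hpa'⟩) not_false
    · rw [heq2]
    · exact absurd (Set.eq_empty_iff_forall_notMem.mp h1' p ⟨h, hpa⟩) not_false
  · exact (myFamL_key hpa' hpa h1' h1 ho' ho hn' h).symm

lemma myFamB_key {p a s p' a' s' : L} (hpa : p < a) (has : a < s)
    (hpa' : p' < a') (has' : a' < s')
    (h1 : Set.Ioo p a = ∅) (h2 : Set.Ioo a s = ∅)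
    (h1' : Set.Ioo p' a' = ∅) (h2' : Set.Ioo a' s' = ∅)
    (ho : IsOpen ({p, a, s} : Set L)) (ho' : IsOpen ({p', a', s'} : Set L))
    (hAS : ¬ IsOpen ({a, s} : Set L)) (hS : ¬ IsOpen ({s} : Set L))
    (haa' : a < a') :
    Disjoint ({p, a, s} : Set L) ({p', a', s'} : Set L) := by
  have hap' : a ≤ p' := by
    by_contra h
    exact (Set.eq_empty_iff_forall_notMem.mp h1' a) ⟨not_le.mp h, haa'⟩
  have hsa' : s ≤ a' := by
    by_contra h
    exact (Set.eq_empty_iff_forall_notMem.mp h2 a') ⟨haa', not_le.mp h⟩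
  rcases eq_or_lt_of_le hap' with heq | hlt
  · -- a = p', hence s = a'
    exfalso
    have hsa'2 : a' ≤ s := by
      by_contra h
      refine (Set.eq_empty_iff_forall_notMem.mp h1' s) ⟨?_, not_le.mp h⟩
      rw [← heq]; exact has
    have hseq : s = a' := le_antisymm hsa' hsa'2
    apply hAS
    have hset : ({p, a, s} : Set L) ∩ {p', a', s'} = {a, s} := by
      ext z
      simp only [Set.mem_inter_iff, Set.mem_insert_iff, Set.mem_singleton_iff]
      constructor
      · rintro ⟨hz1 | hz1 | hz1, hz2⟩
        · exfalso
          rcases hz2 with h | h | h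
          · exact absurd ((hz1.symm.trans h).trans heq.symm) (ne_of_lt hpa)
          · exact absurd (hz1.symm.trans h) (ne_of_lt (hpa.trans haa'))
          · exact absurd (hz1.symm.trans h) (ne_of_lt ((hpa.trans haa').trans has'))
        · exact Or.inl hz1
        · exact Or.inr hz1
      · rintro (h | h)
        · exact ⟨Or.inr (Or.inl h), Or.inl (h.trans heq)⟩
        · exact ⟨Or.inr (Or.inr h), Or.inr (Or.inl (h.trans hseq))⟩
    exact hset ▸ ho.inter ho'
  · -- a < p', hence s ≤ p'
    have hsp' : s ≤ p' := by
      by_contra h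
      exact (Set.eq_empty_iff_forall_notMem.mp h2 p') ⟨hlt, not_le.mp h⟩
    rcases eq_or_lt_of_le hsp' with hseq | hslt
    · -- s = p' : intersection is {s}
      exfalso
      apply hS
      have hps' : p < p' := hseq ▸ (hpa.trans has)
      have has2 : a < p' := hseq ▸ has
      have hset : ({p, a, s} : Set L) ∩ {p', a', s'} = {s} := by
        ext z
        simp only [Set.mem_inter_iff, Set.mem_insert_iff, Set.mem_singleton_iff]
        constructor
        · rintro ⟨hz1 | hz1 | hz1, hz2⟩
          · exfalso
            rcases hz2 with h | h | h
            · exact absurd (hz1.symm.trans h) (ne_of_lt hps')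
            · exact absurd (hz1.symm.trans h) (ne_of_lt (hps'.trans hpa'))
            · exact absurd (hz1.symm.trans h) (ne_of_lt ((hps'.trans hpa').trans has'))
          · exfalso
            rcases hz2 with h | h | h
            · exact absurd (hz1.symm.trans h) (ne_of_lt has2)
            · exact absurd (hz1.symm.trans h) (ne_of_lt (has2.trans hpa'))
            · exact absurd (hz1.symm.trans h) (ne_of_lt ((has2.trans hpa').trans has'))
          · exact hz1
        · intro h
          exact ⟨Or.inr (Or.inr h), Or.inl (h.trans hseq)⟩
      exact hset ▸ ho.inter ho'
    · -- s < p' : disjoint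
      rw [Set.disjoint_left]
      intro z hz1 hz2
      simp only [Set.mem_insert_iff, Set.mem_singleton_iff] at hz1 hz2
      have hzs : z ≤ s := by
        rcases hz1 with h | h | h
        · exact h.le.trans (hpa.le.trans has.le)
        · exact h.le.trans has.le
        · exact h.le
      have hzp' : p' ≤ z := by
        rcases hz2 with h | h | h
        · exact h.ge
        · exact (hpa'.le.trans h.ge).trans_eq rfl
        · exact (hpa'.le.trans has'.le).trans h.ge
      exact absurd ((hzs.trans_lt hslt).trans_le hzp') (lt_irrefl z)

lemma myFamB_disj : (myFamB L).PairwiseDisjoint id := by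
  rintro u ⟨p, a, s, rfl, hpa, has, h1, h2, ho, hPA, hAS, hP, hA, hS⟩
    v ⟨p', a', s', rfl, hpa', has', h1', h2', ho', hPA', hAS', hP', hA', hS'⟩ huv
  show Disjoint ({p, a, s} : Set L) {p', a', s'}
  rcases lt_trichotomy a a' with h | heq | h
  · exact myFamB_key hpa has hpa' has' h1 h2 h1' h2' ho ho' hAS hS h
  · exfalso
    apply huv
    subst heq
    have hpp : p = p' := by
      rcases lt_trichotomy p p' with h | h | h
      · exact absurd (Set.eq_empty_iff_forall_notMem.mp h1 p' ⟨h, hpa'⟩) not_false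
      · exact h
      · exact absurd (Set.eq_empty_iff_forall_notMem.mp h1' p ⟨h, hpa⟩) not_false
    have hss : s = s' := by
      rcases lt_trichotomy s s' with h | h | h
      · exact absurd (Set.eq_empty_iff_forall_notMem.mp h2' s ⟨has, h⟩) not_false
      · exact h
      · exact absurd (Set.eq_empty_iff_forall_notMem.mp h2 s' ⟨has', h⟩) not_false
    rw [hpp, hss]
  · exact (myFamB_key hpa' has' hpa has h1' h2' h1 h2 ho' ho hAS' hS' h).symm

end Aux

theorem stmt_8 {L : Type*} [LinearOrder L] [t : TopologicalSpace L] [T2Space L]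
    [TopologicalSpace.SeparableSpace L]
    (hGO : ∃ C : Set (Set L), (∀ s ∈ C, s.OrdConnected) ∧
      t = TopologicalSpace.generateFrom C) :
    ∃ 𝒰 : ℕ → Set (Set L),
      (∀ n, (𝒰 n).PairwiseDisjoint id) ∧
      (∀ n, ∀ u ∈ 𝒰 n, u.Nonempty ∧ IsOpen u) ∧
      (∀ O : Set L, IsOpen O → O.Nonempty → ∃ n, ∃ u ∈ 𝒰 n, u ⊆ O) := by
  classical
  rcases isEmpty_or_nonempty L with hL | hL
  · exact ⟨fun _ => ∅, fun n => Set.pairwiseDisjoint_empty,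
      fun n u hu => absurd hu (Set.notMem_empty u),
      fun O _ hO => (IsEmpty.false hO.choose).elim⟩
  obtain ⟨C, hCconv, hCgen⟩ := hGO
  have hbasis := TopologicalSpace.isTopologicalBasis_of_subbasis hCgen
  -- the topology is finer than the order topology
  have hIoi : ∀ a : L, IsOpen (Set.Ioi a) := by
    intro a
    rw [isOpen_iff_forall_mem_open]
    intro x hx
    obtain ⟨U, V, hU, hV, hxU, haV, hUV⟩ := t2_separation (ne_of_gt hx)
    obtain ⟨W, hWB, hxW, hWU⟩ := hbasis.exists_subset_of_mem_open hxU hU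
    obtain ⟨f, ⟨hffin, hfC⟩, rfl⟩ := hWB
    have hWconv : (⋂₀ f).OrdConnected := Set.ordConnected_sInter fun s hs => hCconv s (hfC hs)
    refine ⟨⋂₀ f, fun w hw => ?_, hbasis.isOpen ⟨f, ⟨hffin, hfC⟩, rfl⟩, hxW⟩
    by_contra hwa
    have haW : a ∈ ⋂₀ f := hWconv.out hw hxW ⟨not_lt.mp (fun h => hwa h), le_of_lt hx⟩
    exact Set.disjoint_left.mp hUV (hWU haW) haV
  have hIio : ∀ a : L, IsOpen (Set.Iio a) := by
    intro a
    rw [isOpen_iff_forall_mem_open]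
    intro x hx
    obtain ⟨U, V, hU, hV, hxU, haV, hUV⟩ := t2_separation (ne_of_lt hx)
    obtain ⟨W, hWB, hxW, hWU⟩ := hbasis.exists_subset_of_mem_open hxU hU
    obtain ⟨f, ⟨hffin, hfC⟩, rfl⟩ := hWB
    have hWconv : (⋂₀ f).OrdConnected := Set.ordConnected_sInter fun s hs => hCconv s (hfC hs)
    refine ⟨⋂₀ f, fun w hw => ?_, hbasis.isOpen ⟨f, ⟨hffin, hfC⟩, rfl⟩, hxW⟩
    by_contra hwa
    have haW : a ∈ ⋂₀ f := hWconv.out hxW hw ⟨le_of_lt hx, not_lt.mp (fun h => hwa h)⟩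
    exact Set.disjoint_left.mp hUV (hWU haW) haV
  have hIoo : ∀ a b : L, IsOpen (Set.Ioo a b) := by
    intro a b
    rw [← Set.Ioi_inter_Iio]
    exact (hIoi a).inter (hIio b)
  obtain ⟨d, hd⟩ := TopologicalSpace.exists_dense_seq L
  refine ⟨fun n => match n with
    | 0 => myFam0 L
    | 1 => myFamL L
    | 2 => myFamR L
    | 3 => myFamB L
    | (m+4) => {u | u = Set.Ioo (d m.unpair.1) (d m.unpair.2) ∧ u.Nonempty},
    ?_, ?_, ?_⟩
  · rintro (_|_|_|_|m)
    · exact myFam0_disj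
    · exact myFamL_disj
    · exact myFamR_disj
    · exact myFamB_disj
    · intro u hu v hv huv
      exact absurd (hu.1.trans hv.1.symm) huv
  · rintro (_|_|_|_|m) u hu
    · obtain ⟨x, rfl, hx⟩ := hu
      exact ⟨Set.singleton_nonempty x, hx⟩
    · obtain ⟨x, y, rfl, _, _, ho, _⟩ := hu
      exact ⟨Set.insert_nonempty _ _, ho⟩
    · obtain ⟨x, y, rfl, _, _, ho, _⟩ := hu
      exact ⟨Set.insert_nonempty _ _, ho⟩
    · obtain ⟨p, a, s, rfl, _, _, _, _, ho, _⟩ := hu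
      exact ⟨Set.insert_nonempty _ _, ho⟩
    · exact ⟨hu.2, hu.1 ▸ hIoo _ _⟩
  · intro O hO hOne
    obtain ⟨x, hxO⟩ := hOne
    obtain ⟨W, hWB, hxW, hWO⟩ := hbasis.exists_subset_of_mem_open hxO hO
    obtain ⟨f, ⟨hffin, hfC⟩, rfl⟩ := hWB
    set b := ⋂₀ f with hbdef
    have hbconv : b.OrdConnected := Set.ordConnected_sInter fun s hs => hCconv s (hfC hs)
    have hbopen : IsOpen b := hbasis.isOpen ⟨f, ⟨hffin, hfC⟩, rfl⟩
    have hbne : b.Nonempty := ⟨x, hxW⟩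
    obtain ⟨i, hi⟩ := hd.exists_mem_open hbopen hbne
    set a := d i with hadef
    by_cases hK2 : ∃ z ∈ b, IsOpen ({z} : Set L)
    · obtain ⟨z, hzb, hzo⟩ := hK2
      exact ⟨0, {z}, ⟨z, rfl, hzo⟩, (Set.singleton_subset_iff.mpr hzb).trans hWO⟩
    push_neg at hK2
    by_cases hK1 : ∃ j k, (Set.Ioo (d j) (d k)).Nonempty ∧ Set.Ioo (d j) (d k) ⊆ b
    · obtain ⟨j, k, hne, hsub⟩ := hK1
      refine ⟨Nat.pair j k + 4, Set.Ioo (d j) (d k), ⟨by rw [Nat.unpair_pair], hne⟩,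
        hsub.trans hWO⟩
    push_neg at hK1
    -- the two claims
    have claimR : ∀ e ∈ b, a < e → Set.Ioo a e = ∅ := by
      intro e heb hae
      by_contra hne
      have hne' : (Set.Ioo a e).Nonempty := Set.nonempty_iff_ne_empty.mpr hne
      obtain ⟨j, hj⟩ := hd.exists_mem_open (hIoo a e) hne'
      have hdjb : d j ∈ b := hbconv.out hi heb ⟨le_of_lt hj.1, le_of_lt hj.2⟩
      by_cases hadj : (Set.Ioo a (d j)).Nonempty
      · exact hK1 i j hadj (fun z hz => hbconv.out hi hdjb ⟨hz.1.le, hz.2.le⟩)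
      · by_cases hdje : (Set.Ioo (d j) e).Nonempty
        · obtain ⟨k, hk⟩ := hd.exists_mem_open (hIoo (d j) e) hdje
          have hkb : d k ∈ b := hbconv.out hdjb heb ⟨hk.1.le, hk.2.le⟩
          exact hK1 i k ⟨d j, hj.1, hk.1⟩ (fun z hz => hbconv.out hi hkb ⟨hz.1.le, hz.2.le⟩)
        · have hsingle : Set.Ioo a e = {d j} := by
            ext z
            constructor
            · intro hz
              by_contra hzz
              rcases lt_or_gt_of_ne hzz with h | h
              · exact hadj ⟨z, hz.1, h⟩
              · exact hdje ⟨z, h, hz.2⟩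
            · rintro rfl; exact hj
          exact hK2 (d j) hdjb (hsingle ▸ hIoo a e)
    have claimL : ∀ e ∈ b, e < a → Set.Ioo e a = ∅ := by
      intro e heb hae
      by_contra hne
      have hne' : (Set.Ioo e a).Nonempty := Set.nonempty_iff_ne_empty.mpr hne
      obtain ⟨j, hj⟩ := hd.exists_mem_open (hIoo e a) hne'
      have hdjb : d j ∈ b := hbconv.out heb hi ⟨le_of_lt hj.1, le_of_lt hj.2⟩
      by_cases hadj : (Set.Ioo (d j) a).Nonempty
      · exact hK1 j i hadj (fun z hz => hbconv.out hdjb hi ⟨hz.1.le, hz.2.le⟩)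
      · by_cases hdje : (Set.Ioo e (d j)).Nonempty
        · obtain ⟨k, hk⟩ := hd.exists_mem_open (hIoo e (d j)) hdje
          have hkb : d k ∈ b := hbconv.out heb hdjb ⟨hk.1.le, hk.2.le⟩
          exact hK1 k i ⟨d j, hk.2, hj.2⟩ (fun z hz => hbconv.out hkb hi ⟨hz.1.le, hz.2.le⟩)
        · have hsingle : Set.Ioo e a = {d j} := by
            ext z
            constructor
            · intro hz
              by_contra hzz
              rcases lt_or_gt_of_ne hzz with h | h
              · exact hdje ⟨z, hz.1, h⟩
              · exact hadj ⟨z, h, hz.2⟩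
            · rintro rfl; exact hj
          exact hK2 (d j) hdjb (hsingle ▸ hIoo e a)
    have hRsub : ∀ e ∈ b, ∀ e' ∈ b, a < e → a < e' → e = e' := by
      intro e he e' he' h1 h2
      rcases lt_trichotomy e e' with h | h | h
      · exact absurd (Set.eq_empty_iff_forall_notMem.mp (claimR e' he' h2) e ⟨h1, h⟩) not_false
      · exact h
      · exact absurd (Set.eq_empty_iff_forall_notMem.mp (claimR e he h1) e' ⟨h2, h⟩) not_false
    have hLsub : ∀ e ∈ b, ∀ e' ∈ b, e < a → e' < a → e = e' := by
      intro e he e' he' h1 h2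
      rcases lt_trichotomy e e' with h | h | h
      · exact absurd (Set.eq_empty_iff_forall_notMem.mp (claimL e he h1) e' ⟨h, h2⟩) not_false
      · exact h
      · exact absurd (Set.eq_empty_iff_forall_notMem.mp (claimL e' he' h2) e ⟨h, h1⟩) not_false
    rcases Set.eq_empty_or_nonempty (b ∩ Set.Ioi a) with hR0 | ⟨s, hsb, hsa⟩
    · rcases Set.eq_empty_or_nonempty (b ∩ Set.Iio a) with hL0 | ⟨p, hpb, hpa⟩
      · -- b = {a}, isolated point, contradiction
        exfalso
        have hba : b = {a} := by
          apply Set.eq_singleton_iff_unique_mem.mpr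
          refine ⟨hi, fun z hz => ?_⟩
          rcases lt_trichotomy z a with h | h | h
          · exact absurd (Set.eq_empty_iff_forall_notMem.mp hL0 z ⟨hz, h⟩) not_false
          · exact h
          · exact absurd (Set.eq_empty_iff_forall_notMem.mp hR0 z ⟨hz, h⟩) not_false
        exact hK2 a hi (hba ▸ hbopen)
      · -- b = {p, a}
        have hba : b = {p, a} := by
          ext z
          simp only [Set.mem_insert_iff, Set.mem_singleton_iff]
          constructor
          · intro hz
            rcases lt_trichotomy z a with h | h | h
            · exact Or.inl (hLsub z hz p hpb h hpa)
            · exact Or.inr h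
            · exact absurd (Set.eq_empty_iff_forall_notMem.mp hR0 z ⟨hz, h⟩) not_false
          · rintro (rfl | rfl)
            · exact hpb
            · exact hi
        exact ⟨1, b, ⟨p, a, hba, hpa, claimL p hpb hpa, hbopen, hK2 a hi⟩, hWO⟩
    · rcases Set.eq_empty_or_nonempty (b ∩ Set.Iio a) with hL0 | ⟨p, hpb, hpa⟩
      · -- b = {a, s}
        have hba : b = {a, s} := by
          ext z
          simp only [Set.mem_insert_iff, Set.mem_singleton_iff]
          constructor
          · intro hz
            rcases lt_trichotomy z a with h | h | h
            · exact absurd (Set.eq_empty_iff_forall_notMem.mp hL0 z ⟨hz, h⟩) not_false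
            · exact Or.inl h
            · exact Or.inr (hRsub z hz s hsb h hsa)
          · rintro (rfl | rfl)
            · exact hi
            · exact hsb
        exact ⟨2, b, ⟨a, s, hba, hsa, claimR s hsb hsa, hbopen, hK2 a hi⟩, hWO⟩
      · -- b = {p, a, s}
        have hba : b = {p, a, s} := by
          ext z
          simp only [Set.mem_insert_iff, Set.mem_singleton_iff]
          constructor
          · intro hz
            rcases lt_trichotomy z a with h | h | h
            · exact Or.inl (hLsub z hz p hpb h hpa)
            · exact Or.inr (Or.inl h)
            · exact Or.inr (Or.inr (hRsub z hz s hsb h hsa))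
          · rintro (rfl | rfl | rfl)
            · exact hpb
            · exact hi
            · exact hsb
        by_cases hAS : IsOpen ({a, s} : Set L)
        · refine ⟨2, {a, s}, ⟨a, s, rfl, hsa, claimR s hsb hsa, hAS, hK2 a hi⟩, ?_⟩
          refine Set.Subset.trans ?_ hWO
          rintro z (rfl | rfl)
          · exact hi
          · exact hsb
        by_cases hPA : IsOpen ({p, a} : Set L)
        · refine ⟨1, {p, a}, ⟨p, a, rfl, hpa, claimL p hpb hpa, hPA, hK2 a hi⟩, ?_⟩
          refine Set.Subset.trans ?_ hWO
          rintro z (rfl | rfl)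
          · exact hpb
          · exact hi
        · exact ⟨3, b, ⟨p, a, s, hba, hpa, hsa, claimL p hpb hpa, claimR s hsb hsa, hbopen,
            hPA, hAS, hK2 p hpb, hK2 a hi, hK2 s hsb⟩, hWO⟩
end

section
/- Every subspace of an ordinal (with the order topology from the ordinal, restricted to the subspace) has a dense subset that is a countable union of subspaces discrete in themselves; in fact, the set of points isolated in the subspace is dense in it, hence a single discrete-in-itself dense subset suffices when the subspace consists of ordinals, i.e., any subspace of an ordinal with the subspace order topology has a σ-disjoint π-base. -/
theorem stmt_9 (o : Ordinal) (L : Set Ordinal) (hL : ∀ x ∈ L, x < o) :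
    ∃ 𝒰 : ℕ → Set (Set L),
      (∀ n, (𝒰 n).PairwiseDisjoint id) ∧
      (∀ n, ∀ u ∈ 𝒰 n, u.Nonempty ∧ IsOpen u) ∧
      (∀ O : Set L, IsOpen O → O.Nonempty → ∃ n, ∃ u ∈ 𝒰 n, u ⊆ O) := by
  classical
  refine ⟨fun _ => {u : Set L | IsOpen u ∧ ∃ x : L, u = {x}}, ?_, ?_, ?_⟩
  · intro n u hu v hv huv
    obtain ⟨_, x, rfl⟩ := hu
    obtain ⟨_, y, rfl⟩ := hv
    exact Set.disjoint_singleton.mpr fun h => huv (by rw [h])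
  · rintro n u ⟨hopen, x, rfl⟩
    exact ⟨⟨x, rfl⟩, hopen⟩
  · intro O hO hOne
    -- take the minimum of O
    set S : Set Ordinal := Subtype.val '' O with hS
    have hSne : S.Nonempty := hOne.image _
    obtain ⟨y, hyO, hym⟩ := csInf_mem hSne
    set m : Ordinal := sInf S with hm
    have hmin : ∀ z : L, z ∈ O → m ≤ (z : Ordinal) := fun z hz =>
      csInf_le' ⟨z, hz, rfl⟩
    obtain ⟨U, hUopen, hUpre⟩ := isOpen_induced_iff.mp hO
    have hmU : m ∈ U := by rw [← hym]; rw [← hUpre] at hyO; exact hyO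
    -- find an open interval V in Ordinal with V ∩ L = {m}
    have : ∃ V : Set Ordinal, IsOpen V ∧ Subtype.val ⁻¹' V = {y} := by
      rcases Ordinal.zero_or_succ_or_isSuccLimit m with h0 | ⟨b, hb⟩ | hlim
      · refine ⟨Set.Iio 1, isOpen_Iio, ?_⟩
        ext z
        simp only [Set.mem_preimage, Set.mem_Iio, Set.mem_singleton_iff]
        constructor
        · intro hz
          have : (z : Ordinal) = 0 := Ordinal.lt_one_iff_zero.mp hz
          exact Subtype.ext (by rw [this, hym, h0])
        · intro hz; rw [hz, hym, h0]; exact zero_lt_one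
      · refine ⟨Set.Ioo b (Order.succ m), isOpen_Ioo, ?_⟩
        ext z
        simp only [Set.mem_preimage, Set.mem_Ioo, Set.mem_singleton_iff]
        constructor
        · rintro ⟨h1, h2⟩
          have hge : m ≤ (z : Ordinal) := by rw [← hb]; exact Order.succ_le_of_lt h1
          have hle : (z : Ordinal) ≤ m := Order.lt_succ_iff.mp h2
          exact Subtype.ext (by rw [hym]; exact le_antisymm hle hge)
        · intro hz
          rw [hz, hym]
          exact ⟨by rw [← hb]; exact Order.lt_succ b, Order.lt_succ m⟩
      · obtain ⟨a, ha, haU⟩ := (Ordinal.isOpen_iff.mp hUopen) m hmU hlim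
        refine ⟨Set.Ioo a (Order.succ m), isOpen_Ioo, ?_⟩
        ext z
        simp only [Set.mem_preimage, Set.mem_Ioo, Set.mem_singleton_iff]
        constructor
        · rintro ⟨h1, h2⟩
          have hle : (z : Ordinal) ≤ m := Order.lt_succ_iff.mp h2
          rcases lt_or_eq_of_le hle with hlt | heq
          · exfalso
            have hzU : z ∈ Subtype.val ⁻¹' U := haU ⟨h1, hlt⟩
            rw [hUpre] at hzU
            exact absurd (hmin z hzU) (not_le.mpr hlt)
          · exact Subtype.ext (by rw [hym, heq])
        · intro hz
          rw [hz, hym]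
          exact ⟨ha, Order.lt_succ m⟩
    obtain ⟨V, hVopen, hVpre⟩ := this
    refine ⟨0, {y}, ⟨?_, y, rfl⟩, Set.singleton_subset_iff.mpr hyO⟩
    rw [← hVpre]
    exact hVopen.preimage continuous_subtype_val
end

section
/- Let L be a linear order with the order topology, let A, B ⊆ L be subsets each discrete in themselves, and let U ⊆ L be a nonempty open convex set with no isolated points of L inside it. Then A ∪ B is nowhere dense in U. -/
open Set Filter Topology

/-- A set discrete in itself cannot be dense in any nonempty open subset of a crowded set. -/
lemma aux_discrete_not_dense {L : Type*} [LinearOrder L] [TopologicalSpace L] [OrderTopology L]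
    (S : Set L) (hS : DiscreteTopology S)
    (U : Set L) (hcrowded : ∀ x ∈ U, ¬ IsOpen ({x} : Set L))
    (V : Set L) (hV : IsOpen V) (hVU : V ⊆ U) (hne : V.Nonempty)
    (h : V ⊆ closure (S ∩ U)) : False := by
  obtain ⟨v, hv⟩ := hne
  have hmeet : (V ∩ (S ∩ U)).Nonempty := by
    have hcl := h hv
    rw [mem_closure_iff] at hcl
    obtain ⟨y, hyV, hyS⟩ := hcl V hV hv
    exact ⟨y, hyV, hyS⟩
  obtain ⟨a, haV, haS, haU⟩ := hmeet
  rw [discreteTopology_subtype_iff] at hS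
  have hbot : 𝓝[S \ {a}] a = ⊥ := by
    rw [diff_eq, inter_comm, nhdsWithin_inter']
    exact hS a haS
  have hnacl : a ∉ closure (S \ {a}) := by
    rw [mem_closure_iff_nhdsWithin_neBot, hbot]
    exact fun hh => hh.ne rfl
  set W := (closure (S \ {a}))ᶜ with hWdef
  have hWopen : IsOpen W := isClosed_closure.isOpen_compl
  have haW : a ∈ W := hnacl
  -- V ∩ W is an open set containing a; it can't be just {a}
  have hnotsub : ¬ (V ∩ W ⊆ {a}) := by
    intro hsub
    have heq : V ∩ W = {a} := subset_antisymm hsub (by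
      rintro x rfl; exact ⟨haV, haW⟩)
    exact hcrowded a haU (heq ▸ hV.inter hWopen)
  obtain ⟨x, hxVW, hxa⟩ := not_subset.mp hnotsub
  have hxcl : x ∈ closure (S ∩ U) := h hxVW.1
  rw [mem_closure_iff] at hxcl
  obtain ⟨y, ⟨⟨hyV, hyW⟩, hyne⟩, hyS, hyU⟩ :=
    hxcl ((V ∩ W) ∩ {a}ᶜ) (((hV.inter hWopen).inter isOpen_compl_singleton))
      ⟨hxVW, hxa⟩
  -- y ∈ W means y ∉ closure (S \ {a}), but y ∈ S and y ≠ a means y ∈ S \ {a}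
  exact hyW (subset_closure ⟨hyS, hyne⟩)

theorem stmt_11 {L : Type*} [LinearOrder L] [TopologicalSpace L] [OrderTopology L]
    (A B : Set L) (hA : DiscreteTopology A) (hB : DiscreteTopology B)
    (U : Set L) (hUne : U.Nonempty) (hUopen : IsOpen U) (hUconv : U.OrdConnected)
    (hcrowded : ∀ x ∈ U, ¬ IsOpen ({x} : Set L)) :
    interior (closure ((A ∪ B) ∩ U)) ∩ U = ∅ := by
  by_contra hne
  obtain ⟨x, hx⟩ := Set.nonempty_iff_ne_empty.mpr hne
  set T := interior (closure ((A ∪ B) ∩ U)) ∩ U with hTdef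
  have hTopen : IsOpen T := isOpen_interior.inter hUopen
  have hTU : T ⊆ U := inter_subset_right
  have hTsub : T ⊆ closure (A ∩ U) ∪ closure (B ∩ U) := by
    intro y hy
    have : y ∈ closure ((A ∪ B) ∩ U) := interior_subset hy.1
    have hsplit : (A ∪ B) ∩ U = (A ∩ U) ∪ (B ∩ U) := union_inter_distrib_right A B U
    rw [hsplit, closure_union] at this
    exact this
  -- T \ closure (A ∩ U) is open
  by_cases hcase : (T \ closure (A ∩ U)).Nonempty
  · have hopen : IsOpen (T \ closure (A ∩ U)) := hTopen.sdiff isClosed_closure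
    have hsub : T \ closure (A ∩ U) ⊆ closure (B ∩ U) := fun y hy =>
      (hTsub hy.1).resolve_left hy.2
    exact aux_discrete_not_dense B hB U hcrowded _ hopen
      (fun y hy => hTU hy.1) hcase hsub
  · have hsub : T ⊆ closure (A ∩ U) := by
      intro y hy
      by_contra hyn
      exact hcase ⟨y, hy, hyn⟩
    exact aux_discrete_not_dense A hA U hcrowded T hTopen hTU ⟨x, hx⟩ hsub
end
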